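/- Sewing lemma (existence): Let E be a Banach space, T > 0, and let μ be a continuous E-valued two-index map on {0 ≤ s ≤ t ≤ T} satisfying the almost-additivity bound |μ_{ts} − (μ_{tu} + μ_{us})| ≤ c₁|t−s|^ζ for all 0 ≤ s ≤ u ≤ t ≤ T, with c₁ ≥ 0 and ζ > 1. Then there exists a unique path x : [0,T] → E with x_0 = 0 and a constant C depending only on ζ such that |x_t − x_s − μ_{ts}| ≤ C c₁ |t−s|^ζ for all 0 ≤ s ≤ t ≤ T. -/

import Mathlib

open Finset Filter Topology

/-- Riemann-type sum of the two-index map `μ` over the uniform partition of `[s,t]`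
into `m` pieces. -/
noncomputable def sewS {E : Type} [NormedAddCommGroup E] (μ : ℝ → ℝ → E) (m : ℕ) (s t : ℝ) : E :=
  ∑ k ∈ Finset.range m, μ (s + (k + 1) * (t - s) / m) (s + k * (t - s) / m)

lemma sum_range_mul_aux {M : Type} [AddCommMonoid M] (f : ℕ → M) (N m : ℕ) :
    ∑ k ∈ Finset.range (N * m), f k
      = ∑ j ∈ Finset.range N, ∑ i ∈ Finset.range m, f (j * m + i) := by
  induction N with
  | zero => simp
  | succ N ih => rw [Nat.succ_mul, Finset.sum_range_add, ih, Finset.sum_range_succ]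

section Sewing

variable {E : Type} [NormedAddCommGroup E] [NormedSpace ℝ E] [CompleteSpace E]
variable {μ : ℝ → ℝ → E} {c₁ T ζ : ℝ}

lemma pt_bounds {s t : ℝ} (hst : s ≤ t) {N : ℕ} (hN : N ≠ 0) {j : ℕ}
    (hj : j ≤ N) : s ≤ s + j * (t - s) / N ∧ s + j * (t - s) / N ≤ t := by
  have hN' : (0:ℝ) < N := by positivity
  have hts : (0:ℝ) ≤ t - s := sub_nonneg.2 hst
  constructor
  · have : (0:ℝ) ≤ (j:ℝ) * (t - s) / N := by positivity
    linarith
  · have hjN : (j:ℝ) ≤ N := Nat.cast_le.2 hj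
    have h1 : (j:ℝ) * (t - s) ≤ (N:ℝ) * (t - s) := by nlinarith
    have h2 : (j:ℝ) * (t - s) / N ≤ (N:ℝ) * (t - s) / N := by gcongr
    have h3 : (N:ℝ) * (t - s) / N = t - s := by field_simp
    linarith [h2.trans_eq h3]

lemma geom_eq (K : ℝ) {s t : ℝ} (hst : s ≤ t) (n : ℕ) :
    K * ((2:ℝ)^n) * ((t - s) / (2:ℝ)^n) ^ ζ
      = (K * (t - s) ^ ζ) * ((2:ℝ) ^ ((1:ℝ) - ζ)) ^ n := by
  have h2 : (0:ℝ) < 2 := two_pos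
  have hts : (0:ℝ) ≤ t - s := sub_nonneg.2 hst
  have e1 : ((2:ℝ)^n : ℝ) = (2:ℝ) ^ ((n:ℝ)) := (Real.rpow_natCast 2 n).symm
  have e2 : ((2:ℝ) ^ ((1:ℝ) - ζ)) ^ n = (2:ℝ) ^ (((1:ℝ) - ζ) * (n:ℝ)) := by
    rw [← Real.rpow_natCast ((2:ℝ) ^ ((1:ℝ) - ζ)) n, ← Real.rpow_mul h2.le]
  have e3 : (2:ℝ) ^ ((n:ℝ)) / (2:ℝ) ^ ((n:ℝ) * ζ) = (2:ℝ) ^ (((1:ℝ) - ζ) * (n:ℝ)) := by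
    rw [← Real.rpow_sub h2]
    congr 1
    ring
  rw [Real.div_rpow hts (by positivity), e1, e2, ← Real.rpow_mul h2.le, ← e3]
  ring

lemma pow_ratio (K t x : ℝ) (ht : 0 ≤ t) (hx : 0 < x) :
    K * x * (t / x) ^ ζ = (K * t ^ ζ) * x ^ ((1:ℝ) - ζ) := by
  have h1 : x ^ ((1:ℝ) - ζ) = x / x ^ ζ := by
    rw [Real.rpow_sub hx, Real.rpow_one]
  rw [Real.div_rpow ht hx.le, h1]
  ring

lemma sewS_one (s t : ℝ) : sewS μ 1 s t = μ t s := by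
  unfold sewS
  rw [Finset.sum_range_one]
  norm_num

lemma sewS_decomp {N m : ℕ} (hN : N ≠ 0) (hm : m ≠ 0) (s t : ℝ) :
    sewS μ (N * m) s t
      = ∑ j ∈ Finset.range N,
          sewS μ m (s + j * (t - s) / N) (s + (j + 1) * (t - s) / N) := by
  unfold sewS
  rw [sum_range_mul_aux]
  refine Finset.sum_congr rfl fun j hj => Finset.sum_congr rfl fun i hi => ?_
  have hN' : (N:ℝ) ≠ 0 := Nat.cast_ne_zero.2 hN
  have hm' : (m:ℝ) ≠ 0 := Nat.cast_ne_zero.2 hm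
  congr 1 <;> push_cast <;> field_simp <;> ring

variable (hζ : 1 < ζ) (hc : 0 ≤ c₁)
variable (hdef : ∀ s u t : ℝ, 0 ≤ s → s ≤ u → u ≤ t → t ≤ T →
    ‖μ t s - (μ t u + μ u s)‖ ≤ c₁ * (t - s) ^ ζ)
include hζ hc hdef

lemma sew_mu_diag {t : ℝ} (h0 : 0 ≤ t) (hT : t ≤ T) : μ t t = 0 := by
  have h := hdef t t t h0 le_rfl le_rfl hT
  rw [sub_self, Real.zero_rpow (by positivity : ζ ≠ 0), mul_zero] at h
  have h2 : μ t t - (μ t t + μ t t) = -(μ t t) := by abel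
  rw [h2, norm_neg] at h
  exact norm_le_zero_iff.mp h

/-- Crude bound: the `m`-point uniform Riemann sum differs from `μ b a` by at most
`c₁ * m * (b-a)^ζ`. -/
lemma sewS_sub_mu {a b : ℝ} (ha : 0 ≤ a) (hab : a ≤ b) (hbT : b ≤ T) {m : ℕ} (hm : m ≠ 0) :
    ‖sewS μ m a b - μ b a‖ ≤ c₁ * m * (b - a) ^ ζ := by
  have hm' : (0:ℝ) < m := by positivity
  set h : ℝ := (b - a) / m with hh
  have hh0 : 0 ≤ h := by
    have : 0 ≤ b - a := by linarith
    positivity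
  have key : ∀ n : ℕ, a + n * h ≤ T →
      ‖(∑ k ∈ Finset.range n, μ (a + (k + 1) * h) (a + k * h)) - μ (a + n * h) a‖
        ≤ c₁ * n * (n * h) ^ ζ := by
    intro n
    induction n with
    | zero =>
      intro hT'
      simp only [Nat.cast_zero, zero_mul, add_zero, Finset.range_zero, Finset.sum_empty]
      rw [sew_mu_diag hζ hc hdef ha (by simpa using hT')]
      simp [Real.zero_rpow (by positivity : ζ ≠ 0)]
    | succ n ih =>
      intro hT'
      have hnh : a + (n:ℝ) * h ≤ a + ((n:ℝ) + 1) * h := by nlinarith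
      have hT'' : a + ((n:ℝ)+1) * h ≤ T := by push_cast at hT' ⊢; linarith
      have hTn : a + (n:ℝ) * h ≤ T := le_trans hnh hT''
      have ihn := ih hTn
      have hd := hdef a (a + n * h) (a + ((n:ℝ)+1) * h) ha (by nlinarith) hnh hT''
      rw [Finset.sum_range_succ]
      have expand :
          (∑ k ∈ Finset.range n, μ (a + (k + 1) * h) (a + k * h))
              + μ (a + ((n:ℝ) + 1) * h) (a + n * h) - μ (a + (↑(n+1)) * h) a
            = ((∑ k ∈ Finset.range n, μ (a + (k + 1) * h) (a + k * h)) - μ (a + n * h) a)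
              - (μ (a + ((n:ℝ)+1) * h) a
                  - (μ (a + ((n:ℝ)+1) * h) (a + n * h) + μ (a + n * h) a)) := by
        push_cast
        abel
      rw [expand]
      refine le_trans (norm_sub_le _ _) ?_
      have hsimp : a + ((n:ℝ)+1) * h - a = ((n:ℝ)+1) * h := by ring
      rw [hsimp] at hd
      have mono : ((n:ℝ) * h) ^ ζ ≤ (((n:ℝ)+1) * h) ^ ζ := by
        apply Real.rpow_le_rpow (by positivity) (by nlinarith) (by positivity)
      have hpow : (0:ℝ) ≤ (((n:ℝ)+1) * h) ^ ζ := Real.rpow_nonneg (by positivity) _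
      push_cast
      have hmul := mul_le_mul_of_nonneg_left mono (mul_nonneg hc (Nat.cast_nonneg n))
      linarith [ihn, hd]
  have hfin := key m (by
    rw [hh]
    field_simp
    linarith)
  have hb : a + (m:ℝ) * h = b := by rw [hh]; field_simp; ring
  have hS : sewS μ m a b = ∑ k ∈ Finset.range m, μ (a + (k + 1) * h) (a + k * h) := by
    unfold sewS
    refine Finset.sum_congr rfl fun k _ => ?_
    rw [hh]
    congr 1 <;> ring
  rw [hS, ← hb]
  simpa only [add_sub_cancel_left] using hfin

lemma sewS_refine {s t : ℝ} (hs : 0 ≤ s) (hst : s ≤ t) (htT : t ≤ T)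
    {N m : ℕ} (hN : N ≠ 0) (hm : m ≠ 0) :
    ‖sewS μ (N * m) s t - sewS μ N s t‖ ≤ c₁ * m * N * ((t - s) / N) ^ ζ := by
  have hN' : (0:ℝ) < N := by positivity
  have hts : (0:ℝ) ≤ t - s := sub_nonneg.2 hst
  have hSN : sewS μ N s t
      = ∑ j ∈ Finset.range N, μ (s + (j+1) * (t-s) / N) (s + j * (t-s) / N) := rfl
  rw [sewS_decomp hN hm, hSN, ← Finset.sum_sub_distrib]
  refine le_trans (norm_sum_le _ _) ?_
  have hterm : ∀ j ∈ Finset.range N,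
      ‖sewS μ m (s + j*(t-s)/N) (s + (j+1)*(t-s)/N)
          - μ (s + (j+1)*(t-s)/N) (s + j*(t-s)/N)‖
        ≤ c₁ * m * ((t-s)/N) ^ ζ := by
    intro j hj
    rw [Finset.mem_range] at hj
    have hb1 := pt_bounds hst hN (le_of_lt hj)
    have hb2 := pt_bounds hst hN (Nat.succ_le_of_lt hj)
    have hj1 : ((j:ℝ)+1) = ((j+1 : ℕ):ℝ) := by push_cast; ring
    have hd : (0:ℝ) ≤ (t-s)/N := by positivity
    have hmono : s + j*(t-s)/N ≤ s + ((j:ℝ)+1)*(t-s)/N := by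
      have hdd2 : ((j:ℝ)+1)*(t-s)/N - (j:ℝ)*(t-s)/N = (t-s)/N := by ring
      linarith
    have h0 : 0 ≤ s + j*(t-s)/N := le_trans hs hb1.1
    have hup : s + ((j:ℝ)+1)*(t-s)/N ≤ T := by
      rw [hj1]
      exact le_trans hb2.2 htT
    have hres := sewS_sub_mu hζ hc hdef h0 hmono hup hm
    have hdd : (s + ((j:ℝ)+1)*(t-s)/N) - (s + j*(t-s)/N) = (t-s)/N := by ring
    rwa [hdd] at hres
  refine le_trans (Finset.sum_le_sum hterm) ?_
  rw [Finset.sum_const, Finset.card_range, nsmul_eq_mul]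
  exact le_of_eq (by ring)

lemma sewS_step {s t : ℝ} (hs : 0 ≤ s) (hst : s ≤ t) (htT : t ≤ T) (n : ℕ) :
    dist (sewS μ (2^n) s t) (sewS μ (2^(n+1)) s t)
      ≤ (2*c₁*(t-s)^ζ) * ((2:ℝ)^((1:ℝ)-ζ))^n := by
  rw [dist_eq_norm, norm_sub_rev]
  have h1 : (2:ℕ)^(n+1) = 2^n * 2 := by ring
  rw [h1]
  refine le_trans (sewS_refine hζ hc hdef hs hst htT (by positivity) (by norm_num)) ?_
  refine le_of_eq ?_
  push_cast
  rw [geom_eq (c₁ * 2) hst n]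
  ring

end Sewing

/-- The sewing limit: limit of the dyadic Riemann sums. -/
noncomputable def sewXi {E : Type} [NormedAddCommGroup E] (μ : ℝ → ℝ → E) (s t : ℝ) : E :=
  haveI : Nonempty E := ⟨0⟩
  limUnder atTop fun n : ℕ => sewS μ (2 ^ n) s t

section Sewing2

variable {E : Type} [NormedAddCommGroup E] [NormedSpace ℝ E] [CompleteSpace E]
variable {μ : ℝ → ℝ → E} {c₁ T ζ : ℝ}
variable (hζ : 1 < ζ) (hc : 0 ≤ c₁)
variable (hdef : ∀ s u t : ℝ, 0 ≤ s → s ≤ u → u ≤ t → t ≤ T →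
    ‖μ t s - (μ t u + μ u s)‖ ≤ c₁ * (t - s) ^ ζ)
include hζ hc hdef

lemma tendsto_sewS {s t : ℝ} (hs : 0 ≤ s) (hst : s ≤ t) (htT : t ≤ T) :
    Tendsto (fun n : ℕ => sewS μ (2^n) s t) atTop (𝓝 (sewXi μ s t)) := by
  haveI : Nonempty E := ⟨0⟩
  have hr : (2:ℝ)^((1:ℝ)-ζ) < 1 :=
    Real.rpow_lt_one_of_one_lt_of_neg one_lt_two (by linarith)
  have hc' : CauchySeq (fun n : ℕ => sewS μ (2^n) s t) :=
    cauchySeq_of_le_geometric _ _ hr (sewS_step hζ hc hdef hs hst htT)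
  obtain ⟨a, ha⟩ := cauchySeq_tendsto_of_complete hc'
  have h2 : sewXi μ s t = a := ha.limUnder_eq
  rw [h2]
  exact ha

lemma sewS_dist_xi {s t : ℝ} (hs : 0 ≤ s) (hst : s ≤ t) (htT : t ≤ T) (n : ℕ) :
    ‖sewS μ (2^n) s t - sewXi μ s t‖
      ≤ 2*c₁*(t-s)^ζ * ((2:ℝ)^((1:ℝ)-ζ))^n / (1 - (2:ℝ)^((1:ℝ)-ζ)) := by
  have hr : (2:ℝ)^((1:ℝ)-ζ) < 1 :=
    Real.rpow_lt_one_of_one_lt_of_neg one_lt_two (by linarith)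
  have h := dist_le_of_le_geometric_of_tendsto _ _ hr (sewS_step hζ hc hdef hs hst htT)
    (tendsto_sewS hζ hc hdef hs hst htT) n
  rw [dist_eq_norm] at h
  exact h

lemma mu_dist_xi {s t : ℝ} (hs : 0 ≤ s) (hst : s ≤ t) (htT : t ≤ T) :
    ‖μ t s - sewXi μ s t‖ ≤ 2*c₁*(t-s)^ζ / (1 - (2:ℝ)^((1:ℝ)-ζ)) := by
  have h := sewS_dist_xi hζ hc hdef hs hst htT 0
  rw [pow_zero, pow_zero] at h
  rw [sewS_one] at h
  simpa using h

lemma tendsto_sewS_mul {s t : ℝ} (hs : 0 ≤ s) (hst : s ≤ t) (htT : t ≤ T)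
    {m : ℕ} (hm : m ≠ 0) :
    Tendsto (fun n : ℕ => sewS μ (2^n * m) s t) atTop (𝓝 (sewXi μ s t)) := by
  have hr : (2:ℝ)^((1:ℝ)-ζ) < 1 :=
    Real.rpow_lt_one_of_one_lt_of_neg one_lt_two (by linarith)
  have hr0 : (0:ℝ) ≤ (2:ℝ)^((1:ℝ)-ζ) := Real.rpow_nonneg (by norm_num) _
  have key : ∀ n : ℕ, ‖sewS μ (2^n * m) s t - sewS μ (2^n) s t‖
      ≤ (c₁ * m * (t-s)^ζ) * ((2:ℝ)^((1:ℝ)-ζ))^n := by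
    intro n
    refine le_trans (sewS_refine hζ hc hdef hs hst htT (by positivity) hm) ?_
    refine le_of_eq ?_
    push_cast
    exact geom_eq (c₁ * m) hst n
  have h0 : Tendsto (fun n : ℕ => sewS μ (2^n * m) s t - sewS μ (2^n) s t) atTop (𝓝 0) := by
    apply squeeze_zero_norm key
    simpa using (tendsto_pow_atTop_nhds_zero_of_lt_one hr0 hr).const_mul (c₁ * m * (t-s)^ζ)
  have hsum := h0.add (tendsto_sewS hζ hc hdef hs hst htT)
  simpa using hsum

lemma xi_self {s : ℝ} (hs : 0 ≤ s) (hsT : s ≤ T) : sewXi μ s s = 0 := by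
  have h0 : ∀ n : ℕ, sewS μ (2^n) s s = 0 := by
    intro n
    unfold sewS
    refine Finset.sum_eq_zero fun k hk => ?_
    simp only [sub_self, mul_zero, zero_div, add_zero]
    exact sew_mu_diag hζ hc hdef hs hsT
  have ht := tendsto_sewS hζ hc hdef hs le_rfl hsT
  simp only [h0] at ht
  exact (tendsto_nhds_unique ht tendsto_const_nhds)

lemma xi_add {s t : ℝ} (hs : 0 ≤ s) (hst : s ≤ t) (htT : t ≤ T)
    {m k : ℕ} (hm : m ≠ 0) (hk : k ≤ m) :
    sewXi μ s t = sewXi μ s (s + k*(t-s)/m) + sewXi μ (s + k*(t-s)/m) t := by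
  have hm' : (m:ℝ) ≠ 0 := Nat.cast_ne_zero.2 hm
  set u : ℝ := s + k*(t-s)/m with hu
  have hsu : s ≤ u := (pt_bounds hst hm hk).1
  have hut : u ≤ t := (pt_bounds hst hm hk).2
  have hu0 : 0 ≤ u := le_trans hs hsu
  have huT : u ≤ T := le_trans hut htT
  rcases Nat.eq_zero_or_pos k with hk0 | hkpos
  · have hus : u = s := by rw [hu, hk0]; push_cast; ring
    rw [hus, xi_self hζ hc hdef hs (le_trans hst htT), zero_add]
  rcases Nat.eq_or_lt_of_le hk with hkm | hklt
  · have hut' : u = t := by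
      rw [hu, hkm]
      field_simp
      ring
    rw [hut', xi_self hζ hc hdef (le_trans hs hst) htT, add_zero]
  have hk' : k ≠ 0 := Nat.pos_iff_ne_zero.mp hkpos
  have hmk : m - k ≠ 0 := Nat.sub_ne_zero_of_lt hklt
  have hk'' : (k:ℝ) ≠ 0 := Nat.cast_ne_zero.2 hk'
  have hmk' : ((m - k : ℕ):ℝ) = (m:ℝ) - k := Nat.cast_sub hk
  have hmk'' : ((m - k : ℕ):ℝ) ≠ 0 := by
    rw [hmk']
    have : (k:ℝ) < m := by exact_mod_cast hklt
    linarith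
  have hmk3 : (m:ℝ) - (k:ℝ) ≠ 0 := by rw [← hmk']; exact hmk''
  have hdec : ∀ n : ℕ, sewS μ (2^n * m) s t
      = sewS μ (2^n * k) s u + sewS μ (2^n * (m - k)) u t := by
    intro n
    have h2n : (2^n : ℕ) ≠ 0 := by positivity
    rw [Nat.mul_comm (2^n) m, Nat.mul_comm (2^n) k, Nat.mul_comm (2^n) (m-k)]
    rw [sewS_decomp hm h2n, sewS_decomp hk' h2n, sewS_decomp hmk h2n]
    have hadd := Finset.sum_range_add
      (f := fun j : ℕ => sewS μ (2^n) (s + j*(t-s)/m) (s + (j+1)*(t-s)/m)) k (m-k)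
    rw [Nat.add_sub_cancel' hk] at hadd
    rw [hadd]
    congr 1
    · refine Finset.sum_congr rfl fun j hj => ?_
      congr 1 <;> · rw [hu]; field_simp; ring
    · refine Finset.sum_congr rfl fun i hi => ?_
      congr 1 <;> · rw [hu]; push_cast [hmk']; field_simp [hmk3]; ring
  have l1 := tendsto_sewS_mul hζ hc hdef hs hst htT hm
  have l2 := tendsto_sewS_mul hζ hc hdef hs hsu huT hk'
  have l3 := tendsto_sewS_mul hζ hc hdef hu0 hut htT hmk
  simp only [hdec] at l1
  exact tendsto_nhds_unique l1 (l2.add l3)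

end Sewing2

section Sewing3

variable {E : Type} [NormedAddCommGroup E] [NormedSpace ℝ E] [CompleteSpace E]
variable {μ : ℝ → ℝ → E} {c₁ T ζ : ℝ}

lemma sewS_continuousOn
    (hμc : ContinuousOn (fun p : ℝ × ℝ => μ p.1 p.2)
      {p : ℝ × ℝ | 0 ≤ p.2 ∧ p.2 ≤ p.1 ∧ p.1 ≤ T})
    {N : ℕ} (hN : N ≠ 0) :
    ContinuousOn (fun t => sewS μ N 0 t) (Set.Icc (0:ℝ) T) := by
  unfold sewS
  apply continuousOn_finset_sum
  intro k hk
  rw [Finset.mem_range] at hk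
  have hcomp : (fun t : ℝ => μ (0 + ((k:ℝ)+1)*(t-0)/N) (0 + (k:ℝ)*(t-0)/N))
      = (fun p : ℝ × ℝ => μ p.1 p.2) ∘
        (fun t : ℝ => (0 + ((k:ℝ)+1)*(t-0)/N, 0 + (k:ℝ)*(t-0)/N)) := rfl
  rw [hcomp]
  apply hμc.comp
  · apply Continuous.continuousOn
    fun_prop
  · intro t ht
    rw [Set.mem_Icc] at ht
    have hN' : (0:ℝ) < N := by positivity
    have hb2 := pt_bounds (s := 0) (t := t) ht.1 hN (Nat.succ_le_of_lt hk)
    have hcast : ((k+1 : ℕ):ℝ) = (k:ℝ) + 1 := by push_cast; ring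
    rw [hcast] at hb2
    have ht0 : (0:ℝ) ≤ t - 0 := by linarith [ht.1]
    have hdN : (0:ℝ) ≤ (t-0)/N := div_nonneg ht0 hN'.le
    refine ⟨?_, ?_, ?_⟩
    · have : (0:ℝ) ≤ (k:ℝ)*(t-0)/N := div_nonneg (mul_nonneg (Nat.cast_nonneg k) ht0) hN'.le
      simpa using this
    · have hdd : (0 + ((k:ℝ)+1)*(t-0)/N) - (0 + (k:ℝ)*(t-0)/N) = (t-0)/N := by ring
      linarith
    · exact le_trans hb2.2 ht.2

variable (hζ : 1 < ζ) (hc : 0 ≤ c₁)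
variable (hdef : ∀ s u t : ℝ, 0 ≤ s → s ≤ u → u ≤ t → t ≤ T →
    ‖μ t s - (μ t u + μ u s)‖ ≤ c₁ * (t - s) ^ ζ)
include hζ hc hdef

lemma x_continuousOn
    (hμc : ContinuousOn (fun p : ℝ × ℝ => μ p.1 p.2)
      {p : ℝ × ℝ | 0 ≤ p.2 ∧ p.2 ≤ p.1 ∧ p.1 ≤ T}) :
    ContinuousOn (fun t => sewXi μ 0 t) (Set.Icc (0:ℝ) T) := by
  set r := (2:ℝ)^((1:ℝ)-ζ) with hrdef
  have hr : r < 1 := Real.rpow_lt_one_of_one_lt_of_neg one_lt_two (by linarith)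
  have hr0 : (0:ℝ) ≤ r := Real.rpow_nonneg (by norm_num) _
  have h1r : (0:ℝ) < 1 - r := by linarith
  rcases le_or_gt 0 T with hT0 | hT0
  swap
  · have : Set.Icc (0:ℝ) T = ∅ := Set.Icc_eq_empty (by linarith)
    rw [this]
    exact continuousOn_empty _
  have hTU : TendstoUniformlyOn (fun (n:ℕ) t => sewS μ (2^n) 0 t) (fun t => sewXi μ 0 t)
      atTop (Set.Icc (0:ℝ) T) := by
    rw [Metric.tendstoUniformlyOn_iff]
    intro ε hε
    have hD : Tendsto (fun n : ℕ => (2*c₁*T^ζ/(1-r)) * r^n) atTop (𝓝 0) := by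
      simpa using (tendsto_pow_atTop_nhds_zero_of_lt_one hr0 hr).const_mul (2*c₁*T^ζ/(1-r))
    filter_upwards [hD.eventually (gt_mem_nhds hε)] with n hn
    intro t ht
    rw [Set.mem_Icc] at ht
    rw [dist_comm, dist_eq_norm]
    have hb := sewS_dist_xi hζ hc hdef le_rfl ht.1 ht.2 n
    refine lt_of_le_of_lt (le_trans hb ?_) hn
    have htζ : (t-0)^ζ ≤ T^ζ :=
      Real.rpow_le_rpow (by linarith [ht.1]) (by linarith [ht.2]) (by linarith)
    calc 2*c₁*(t-0)^ζ * r^n / (1-r) ≤ 2*c₁*T^ζ * r^n/(1-r) := by gcongr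
    _ = 2*c₁*T^ζ/(1-r) * r^n := by ring
  exact hTU.continuousOn
    (Filter.Eventually.of_forall (f := (atTop : Filter ℕ)) fun n : ℕ =>
      sewS_continuousOn (N := 2^n) hμc (by positivity)).frequently

end Sewing3
/-- Sewing lemma (existence). For `ζ > 1` there is a constant `C`,
depending only on `ζ`, such that every continuous almost-additive two-index map
`μ` with defect bounded by `c₁|t-s|^ζ` is, up to order `C·c₁·|t-s|^ζ`, the
increment map of a path started at `0`, unique among such paths on `[0,T]`. -/
theorem sewing_existence (ζ : ℝ) (hζ : 1 < ζ) :
    ∃ C : ℝ, 0 < C ∧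
      ∀ (E : Type) [NormedAddCommGroup E] [NormedSpace ℝ E] [CompleteSpace E]
        (T : ℝ), 0 < T →
        ∀ (μ : ℝ → ℝ → E) (c₁ : ℝ), 0 ≤ c₁ →
        ContinuousOn (fun p : ℝ × ℝ => μ p.1 p.2)
          {p : ℝ × ℝ | 0 ≤ p.2 ∧ p.2 ≤ p.1 ∧ p.1 ≤ T} →
        (∀ s u t : ℝ, 0 ≤ s → s ≤ u → u ≤ t → t ≤ T →
          ‖μ t s - (μ t u + μ u s)‖ ≤ c₁ * (t - s) ^ ζ) →
        ∃ x : ℝ → E, x 0 = 0 ∧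
          (∀ s t : ℝ, 0 ≤ s → s ≤ t → t ≤ T →
            ‖x t - x s - μ t s‖ ≤ C * c₁ * (t - s) ^ ζ) ∧
          ∀ y : ℝ → E, y 0 = 0 →
            (∀ s t : ℝ, 0 ≤ s → s ≤ t → t ≤ T →
              ‖y t - y s - μ t s‖ ≤ C * c₁ * (t - s) ^ ζ) →
            ∀ t ∈ Set.Icc (0:ℝ) T, y t = x t := by
  set r := (2:ℝ)^((1:ℝ)-ζ) with hrdef
  have hr : r < 1 := Real.rpow_lt_one_of_one_lt_of_neg one_lt_two (by linarith)
  have hr0 : (0:ℝ) ≤ r := Real.rpow_nonneg (by norm_num) _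
  have h1r : (0:ℝ) < 1 - r := by linarith
  refine ⟨2/(1-r), by positivity, ?_⟩
  intro E _ _ _ T hT μ c₁ hc hμc hdef
  have hT0 : (0:ℝ) ≤ T := hT.le
  set x : ℝ → E := fun t => sewXi μ 0 t with hx
  have hx0 : x 0 = 0 := by
    simp only [hx]
    exact xi_self hζ hc hdef le_rfl hT0
  have hxcont : ContinuousOn x (Set.Icc (0:ℝ) T) := x_continuousOn hζ hc hdef hμc
  have hxb : ∀ s t : ℝ, 0 ≤ s → s ≤ t → t ≤ T →
      ‖x t - x s - μ t s‖ ≤ 2/(1-r) * c₁ * (t-s)^ζ := by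
    intro s t hs hst htT
    rcases eq_or_lt_of_le hst with rfl | hlt
    · rw [sub_self, zero_sub, norm_neg, sew_mu_diag hζ hc hdef hs htT, norm_zero, sub_self,
        Real.zero_rpow (by positivity : ζ ≠ 0), mul_zero]
    · have ht0 : (0:ℝ) < t := lt_of_le_of_lt hs hlt
      set k : ℕ → ℕ := fun n => ⌊(2:ℝ)^n * s / t⌋₊ with hkdef
      set u : ℕ → ℝ := fun n => ((k n : ℝ)) * t / 2^n with hudef
      have h2npos : ∀ n : ℕ, (0:ℝ) < 2^n := fun n => by positivity
      have hconn : ∀ n : ℕ,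
          (0:ℝ) + ((k n : ℝ)) * (t - 0) / ((2^n : ℕ) : ℝ) = u n := by
        intro n
        simp only [hudef]
        push_cast
        ring
      have hkle : ∀ n : ℕ, k n ≤ 2^n := by
        intro n
        have h1 : (2:ℝ)^n * s / t ≤ ((2^n : ℕ) : ℝ) := by
          push_cast
          rw [div_le_iff₀ ht0]
          have : (2:ℝ)^n * s ≤ (2:ℝ)^n * t :=
            mul_le_mul_of_nonneg_left hst (by positivity)
          linarith
        calc k n = ⌊(2:ℝ)^n * s / t⌋₊ := rfl
        _ ≤ ⌊((2^n : ℕ) : ℝ)⌋₊ := Nat.floor_le_floor h1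
        _ = 2^n := Nat.floor_natCast _
      have hu0 : ∀ n, 0 ≤ u n := by
        intro n
        simp only [hudef]
        positivity
      have hus : ∀ n, u n ≤ s := by
        intro n
        have hfl : ((k n : ℝ)) ≤ (2:ℝ)^n * s / t :=
          Nat.floor_le (by positivity)
        have hmul := mul_le_mul_of_nonneg_right hfl ht0.le
        have he : ((2:ℝ)^n * s / t) * t = 2^n * s := by field_simp
        rw [he] at hmul
        simp only [hudef]
        rw [div_le_iff₀ (h2npos n)]
        nlinarith
      have hult : ∀ n, s - t/2^n ≤ u n := by
        intro n
        have hfl2 : (2:ℝ)^n * s / t < (k n : ℝ) + 1 := Nat.lt_floor_add_one _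
        have hmul := mul_lt_mul_of_pos_right hfl2 ht0
        have he : ((2:ℝ)^n * s / t) * t = 2^n * s := by field_simp
        rw [he] at hmul
        simp only [hudef]
        rw [sub_le_iff_le_add, ← add_div, le_div_iff₀ (h2npos n)]
        nlinarith
      have htend : Tendsto u atTop (𝓝 s) := by
        have hhalf : Tendsto (fun n : ℕ => ((1:ℝ)/2)^n) atTop (𝓝 0) :=
          tendsto_pow_atTop_nhds_zero_of_lt_one (by norm_num) (by norm_num)
        have hlow : Tendsto (fun n : ℕ => s - t*((1:ℝ)/2)^n) atTop (𝓝 s) := by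
          simpa using
            ((tendsto_const_nhds : Tendsto (fun _ : ℕ => s) atTop (𝓝 s)).sub
              (hhalf.const_mul t))
        refine tendsto_of_tendsto_of_tendsto_of_le_of_le hlow tendsto_const_nhds ?_ hus
        intro n
        show s - t*((1:ℝ)/2)^n ≤ u n
        have hfix : t*((1:ℝ)/2)^n = t/2^n := by
          rw [div_pow, one_pow]
          ring
        rw [hfix]
        exact hult n
      have hadd : ∀ n : ℕ, x t - x (u n) = sewXi μ (u n) t := by
        intro n
        have h2n : (2^n : ℕ) ≠ 0 := by positivity
        have hXi := xi_add hζ hc hdef le_rfl ht0.le htT (m := 2^n) (k := k n) h2n (hkle n)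
        rw [hconn n] at hXi
        simp only [hx]
        rw [hXi]
        abel
      have hest : ∀ n : ℕ, ‖x t - x (u n) - μ t (u n)‖ ≤ 2/(1-r) * c₁ * (t - u n)^ζ := by
        intro n
        rw [hadd n, norm_sub_rev]
        refine le_trans (mu_dist_xi hζ hc hdef (hu0 n) ((hus n).trans hst) htT) ?_
        exact le_of_eq (by rw [hrdef]; ring)
      have hL : Tendsto (fun n => ‖x t - x (u n) - μ t (u n)‖) atTop
          (𝓝 ‖x t - x s - μ t s‖) := by
        apply Tendsto.norm
        refine Tendsto.sub (Tendsto.sub tendsto_const_nhds ?_) ?_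
        · have hcw : ContinuousWithinAt x (Set.Icc (0:ℝ) T) s :=
            hxcont s ⟨hs, le_trans hst htT⟩
          apply hcw.tendsto.comp
          apply tendsto_nhdsWithin_of_tendsto_nhds_of_eventually_within _ htend
          exact Filter.Eventually.of_forall fun n =>
            ⟨hu0 n, le_trans (hus n) (le_trans hst htT)⟩
        · have hcw : ContinuousWithinAt (fun p : ℝ × ℝ => μ p.1 p.2)
              {p : ℝ × ℝ | 0 ≤ p.2 ∧ p.2 ≤ p.1 ∧ p.1 ≤ T} (t, s) :=
            hμc (t,s) ⟨hs, hst, htT⟩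
          have hseq : Tendsto (fun n => ((t, u n) : ℝ × ℝ)) atTop
              (𝓝[{p : ℝ × ℝ | 0 ≤ p.2 ∧ p.2 ≤ p.1 ∧ p.1 ≤ T}] (t,s)) := by
            apply tendsto_nhdsWithin_of_tendsto_nhds_of_eventually_within
            · exact tendsto_const_nhds.prodMk_nhds htend
            · exact Filter.Eventually.of_forall fun n =>
                ⟨hu0 n, (hus n).trans hst, htT⟩
          exact hcw.tendsto.comp hseq
      have hR : Tendsto (fun n => 2/(1-r) * c₁ * (t - u n)^ζ) atTop
          (𝓝 (2/(1-r) * c₁ * (t-s)^ζ)) := by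
        apply Tendsto.const_mul
        have hbase : Tendsto (fun n => t - u n) atTop (𝓝 (t - s)) :=
          tendsto_const_nhds.sub htend
        have hrc : ContinuousAt (fun z : ℝ => z ^ ζ) (t - s) :=
          Real.continuousAt_rpow_const _ _ (Or.inl (by linarith))
        exact hrc.tendsto.comp hbase
      exact le_of_tendsto_of_tendsto' hL hR hest
  refine ⟨x, hx0, hxb, ?_⟩
  intro y hy0 hyb t ht
  rw [Set.mem_Icc] at ht
  have key : ∀ m : ℕ, m ≠ 0 →
      ‖y t - x t‖ ≤ (2*(2/(1-r))*c₁*t^ζ) * ((m:ℝ))^((1:ℝ)-ζ) := by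
    intro m hm
    have hm' : (0:ℝ) < m := by positivity
    set f : ℕ → E := fun j => y ((j:ℝ)*t/m) - x ((j:ℝ)*t/m) with hf
    have htel := Finset.sum_range_sub f m
    have hfm : ((m:ℝ))*t/m = t := by field_simp
    have hfm' : f m = y t - x t := by
      simp only [hf, hfm]
    have hf0' : f 0 = 0 := by
      simp only [hf]
      norm_num [hy0, hx0]
    have hterm : ∀ i ∈ Finset.range m,
        ‖f (i+1) - f i‖ ≤ 2*(2/(1-r))*c₁*(t/m)^ζ := by
      intro i hi
      rw [Finset.mem_range] at hi
      simp only [hf]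
      have hna : (0:ℝ) ≤ (i:ℝ)*t/m := by
        have := ht.1
        positivity
      have hcast : ((↑(i+1):ℝ)) = (i:ℝ)+1 := by push_cast; ring
      have hdd : ((i:ℝ)+1)*t/m - (i:ℝ)*t/m = t/m := by ring
      have htm : (0:ℝ) ≤ t/m := div_nonneg ht.1 hm'.le
      have hab : (i:ℝ)*t/m ≤ ((i:ℝ)+1)*t/m := by linarith
      have hbm : ((i:ℝ)+1) ≤ (m:ℝ) := by exact_mod_cast Nat.succ_le_of_lt hi
      have hbT : ((i:ℝ)+1)*t/m ≤ T := by
        have h1 : ((i:ℝ)+1)*t ≤ (m:ℝ)*t := mul_le_mul_of_nonneg_right hbm ht.1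
        have h2 : ((i:ℝ)+1)*t/m ≤ (m:ℝ)*t/m := by gcongr
        rw [hfm] at h2
        linarith [ht.2]
      have hy1 := hyb ((i:ℝ)*t/m) (((i:ℝ)+1)*t/m) hna hab hbT
      have hx1 := hxb ((i:ℝ)*t/m) (((i:ℝ)+1)*t/m) hna hab hbT
      rw [hdd] at hy1 hx1
      rw [hcast]
      have hexp : (y (((i:ℝ)+1)*t/m) - x (((i:ℝ)+1)*t/m)) - (y ((i:ℝ)*t/m) - x ((i:ℝ)*t/m))
          = (y (((i:ℝ)+1)*t/m) - y ((i:ℝ)*t/m) - μ (((i:ℝ)+1)*t/m) ((i:ℝ)*t/m))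
            - (x (((i:ℝ)+1)*t/m) - x ((i:ℝ)*t/m) - μ (((i:ℝ)+1)*t/m) ((i:ℝ)*t/m)) := by
        abel
      rw [hexp]
      refine le_trans (norm_sub_le _ _) ?_
      calc ‖_‖ + ‖_‖ ≤ 2/(1-r)*c₁*(t/m)^ζ + 2/(1-r)*c₁*(t/m)^ζ := add_le_add hy1 hx1
      _ = 2*(2/(1-r))*c₁*(t/m)^ζ := by ring
    have heq : ∑ i ∈ Finset.range m, (f (i+1) - f i) = y t - x t := by
      rw [htel, hfm', hf0', sub_zero]
    calc ‖y t - x t‖ = ‖∑ i ∈ Finset.range m, (f (i+1) - f i)‖ := by rw [heq]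
    _ ≤ ∑ i ∈ Finset.range m, ‖f (i+1) - f i‖ := norm_sum_le _ _
    _ ≤ ∑ _i ∈ Finset.range m, 2*(2/(1-r))*c₁*(t/m)^ζ := Finset.sum_le_sum hterm
    _ = (m:ℝ) * (2*(2/(1-r))*c₁*(t/m)^ζ) := by
        rw [Finset.sum_const, Finset.card_range, nsmul_eq_mul]
    _ = (2*(2/(1-r))*c₁) * (m:ℝ) * (t/(m:ℝ))^ζ := by ring
    _ = ((2*(2/(1-r))*c₁) * t^ζ) * ((m:ℝ))^((1:ℝ)-ζ) := pow_ratio _ _ _ ht.1 hm'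
    _ = (2*(2/(1-r))*c₁*t^ζ) * ((m:ℝ))^((1:ℝ)-ζ) := by ring
  have hzero : Tendsto (fun m : ℕ => (2*(2/(1-r))*c₁*t^ζ) * ((m:ℝ))^((1:ℝ)-ζ))
      atTop (𝓝 0) := by
    have h1 : Tendsto (fun z : ℝ => z ^ (-(ζ-1))) atTop (𝓝 0) :=
      tendsto_rpow_neg_atTop (by linarith)
    have h2 : Tendsto (fun m : ℕ => ((m:ℝ)) ^ ((1:ℝ)-ζ)) atTop (𝓝 0) := by
      have h3 := h1.comp (tendsto_natCast_atTop_atTop (R := ℝ))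
      simpa [neg_sub, Function.comp_def] using h3
    simpa using h2.const_mul (2*(2/(1-r))*c₁*t^ζ)
  have h0 : ‖y t - x t‖ ≤ 0 := by
    apply ge_of_tendsto hzero
    filter_upwards [eventually_ge_atTop 1] with m hm
    exact key m (by omega)
  have hyx : y t - x t = 0 := norm_le_zero_iff.mp h0
  exact sub_eq_zero.mp hyx
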